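/- Let Ψ₀ be a unit vector with projector P₀ = |Ψ₀⟩⟨Ψ₀|, Q₀ = 1 − P₀, let U₁, …, U_{N²} be unitaries on a Hilbert space, and define p_{[1,N²]} = ⟨Ψ₀, U_{N²}⋯U₁ Ψ₀⟩ and p_i = ⟨Ψ₀, U_i Ψ₀⟩. Then |p_{[1,N²]} − p₁p₂⋯p_{N²}| ≤ (N² − 1) · sup_{1 ≤ i ≤ N²} √(1 − |p_i|²). -/

import Mathlib

open scoped InnerProductSpace

/-- Let `Ψ₀` be a unit vector, `U₁, …, U_{N²}` unitaries on a Hilbert space, and set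
`p_{[1,N²]} = ⟨Ψ₀, U_{N²}⋯U₁Ψ₀⟩`, `p_i = ⟨Ψ₀, U_iΨ₀⟩`. Then
`|p_{[1,N²]} − p₁⋯p_{N²}| ≤ (N² − 1) · sup_i √(1 − |p_i|²)`. -/
theorem telescoping_overlap_estimate {E : Type*} [NormedAddCommGroup E]
    [InnerProductSpace ℂ E] [CompleteSpace E]
    (N : ℕ) (hN : 0 < N) (U : Fin (N ^ 2) → (E →L[ℂ] E))
    (hU : ∀ i, U i ∈ unitary (E →L[ℂ] E))
    (Ψ₀ : E) (hΨ₀ : ‖Ψ₀‖ = 1) :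
    ‖⟪Ψ₀, ((List.ofFn U).reverse.prod) Ψ₀⟫_ℂ - ∏ i, ⟪Ψ₀, U i Ψ₀⟫_ℂ‖ ≤
      ((N : ℝ) ^ 2 - 1) *
        ⨆ i : Fin (N ^ 2), Real.sqrt (1 - ‖⟪Ψ₀, U i Ψ₀⟫_ℂ‖ ^ 2) := by
  classical
  set p : Fin (N ^ 2) → ℂ := fun i => ⟪Ψ₀, U i Ψ₀⟫_ℂ with hp
  set S : ℝ := ⨆ i : Fin (N ^ 2), Real.sqrt (1 - ‖p i‖ ^ 2) with hS
  have hn1 : 1 ≤ N ^ 2 := Nat.one_le_pow 2 N hN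
  have hinner1 : ⟪Ψ₀, Ψ₀⟫_ℂ = 1 := by
    simp [inner_self_eq_norm_sq_to_K, hΨ₀]
  have hterm : ∀ i : Fin (N ^ 2), Real.sqrt (1 - ‖p i‖ ^ 2) ≤ S := by
    intro i
    exact le_ciSup (f := fun i : Fin (N ^ 2) => Real.sqrt (1 - ‖p i‖ ^ 2))
      (Set.Finite.bddAbove (Set.finite_range _)) i
  set p' : ℕ → ℂ := fun i => if h : i < N ^ 2 then p ⟨i, h⟩ else 1 with hp'
  set G : ℕ → ℂ := fun k => ⟪Ψ₀, (((List.ofFn U).drop k).reverse.prod) Ψ₀⟫_ℂ with hG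
  have hGdef : ∀ k, G k = ⟪Ψ₀, (((List.ofFn U).drop k).reverse.prod) Ψ₀⟫_ℂ := fun k => rfl
  have hlen : (List.ofFn U).length = N ^ 2 := by simp
  have hTuni : ∀ k : ℕ, ((List.ofFn U).drop k).reverse.prod ∈ unitary (E →L[ℂ] E) := by
    intro k
    apply list_prod_mem
    intro x hx
    rw [List.mem_reverse] at hx
    obtain ⟨i, rfl⟩ := List.mem_ofFn.mp (List.mem_of_mem_drop hx)
    exact hU i
  have hdropnil : (List.ofFn U).drop (N ^ 2) = [] :=
    List.drop_eq_nil_of_le (le_of_eq hlen)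
  have key : ∀ m k : ℕ, k + m = N ^ 2 →
      ‖G k - ∏ i ∈ Finset.Ico k (N ^ 2), p' i‖ ≤ ((N ^ 2 - 1 - k : ℕ) : ℝ) * S := by
    intro m
    induction m with
    | zero =>
      intro k hk
      have hk' : k = N ^ 2 := by omega
      subst hk'
      rw [hGdef, hdropnil]
      have h0 : N ^ 2 - 1 - N ^ 2 = 0 := by omega
      simp [hinner1, h0, hΨ₀]
    | succ m ih =>
      intro k hk
      have hkn : k < N ^ 2 := by omega
      have hklen : k < (List.ofFn U).length := by omega
      set T : E →L[ℂ] E := ((List.ofFn U).drop (k + 1)).reverse.prod with hT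
      have hGk : G k = ⟪Ψ₀, T (U ⟨k, hkn⟩ Ψ₀)⟫_ℂ := by
        rw [hGdef, List.drop_eq_getElem_cons hklen, List.reverse_cons, List.prod_append]
        simp [ContinuousLinearMap.mul_apply, List.getElem_ofFn]
        rfl
      set c : ℂ := p ⟨k, hkn⟩ with hc
      set v : E := U ⟨k, hkn⟩ Ψ₀ with hv
      set r : E := v - c • Ψ₀ with hr
      have hvr : v = c • Ψ₀ + r := by rw [hr]; abel
      have hGk2 : G k = c * G (k + 1) + ⟪Ψ₀, T r⟫_ℂ := by
        rw [hGk, hGdef (k + 1), ← hT, hvr]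
        simp [inner_add_right, inner_smul_right]
      have hortho : ⟪Ψ₀, r⟫_ℂ = 0 := by
        simp [hr, inner_sub_right, inner_smul_right, hinner1, hc, hp, hv, hΨ₀]
      have hvnorm : ‖v‖ = 1 := by
        rw [hv, ContinuousLinearMap.norm_map_of_mem_unitary (hU ⟨k, hkn⟩), hΨ₀]
      have hcle : ‖c‖ ≤ 1 := by
        have h1 := norm_inner_le_norm (𝕜 := ℂ) Ψ₀ v
        rw [hΨ₀, hvnorm] at h1
        simpa [hc, hp, hv] using h1
      have hrsq : ‖r‖ ^ 2 = 1 - ‖c‖ ^ 2 := by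
        have hcv : ⟪v, Ψ₀⟫_ℂ = starRingEnd ℂ c := by
          rw [hc, hp]; exact (inner_conj_symm _ _).symm
        rw [hr, @norm_sub_sq ℂ, inner_smul_right, hcv, norm_smul, hΨ₀, hvnorm]
        have h2 : (c * starRingEnd ℂ c) = ((‖c‖ : ℝ) : ℂ) ^ 2 := by
          rw [Complex.mul_conj]
          norm_cast
          rw [← Complex.sq_norm]
        rw [h2]
        simp [← Complex.ofReal_pow, RCLike.ofReal_re]
        ring
      have hrnorm : ‖r‖ = Real.sqrt (1 - ‖c‖ ^ 2) := by
        rw [← hrsq, Real.sqrt_sq (norm_nonneg _)]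
      have herr : ‖⟪Ψ₀, T r⟫_ℂ‖ ≤ Real.sqrt (1 - ‖c‖ ^ 2) := by
        have h1 := norm_inner_le_norm (𝕜 := ℂ) Ψ₀ (T r)
        rw [hΨ₀, ContinuousLinearMap.norm_map_of_mem_unitary (hTuni (k + 1)), hrnorm] at h1
        simpa using h1
      have hPk : (∏ i ∈ Finset.Ico k (N ^ 2), p' i)
          = c * ∏ i ∈ Finset.Ico (k + 1) (N ^ 2), p' i := by
        rw [Finset.prod_eq_prod_Ico_succ_bot hkn]
        congr 1
        simp [hp', hkn, hc]
      have hsplit : G k - ∏ i ∈ Finset.Ico k (N ^ 2), p' i =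
          c * (G (k + 1) - ∏ i ∈ Finset.Ico (k + 1) (N ^ 2), p' i) + ⟪Ψ₀, T r⟫_ℂ := by
        rw [hGk2, hPk]; ring
      by_cases hm : m = 0
      · subst hm
        have hk1 : k + 1 = N ^ 2 := by omega
        have hT1 : T = 1 := by rw [hT, hk1, hdropnil]; simp
        have hzero : ⟪Ψ₀, T r⟫_ℂ = 0 := by rw [hT1]; simpa using hortho
        have hG1 : G (k + 1) = 1 := by rw [hk1, hGdef, hdropnil]; simpa using hinner1
        have hP1 : (∏ i ∈ Finset.Ico (k + 1) (N ^ 2), p' i) = 1 := by rw [hk1]; simp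
        rw [hsplit, hzero, hG1, hP1]
        have h0 : N ^ 2 - 1 - k = 0 := by omega
        simp [h0]
      · have hineq := ih (k + 1) (by omega)
        have hSnn : 0 ≤ S := le_trans (Real.sqrt_nonneg _) (hterm ⟨k, hkn⟩)
        calc ‖G k - ∏ i ∈ Finset.Ico k (N ^ 2), p' i‖
            ≤ ‖c * (G (k + 1) - ∏ i ∈ Finset.Ico (k + 1) (N ^ 2), p' i)‖ +
              ‖⟪Ψ₀, T r⟫_ℂ‖ := by rw [hsplit]; exact norm_add_le _ _
          _ ≤ 1 * (((N ^ 2 - 1 - (k + 1) : ℕ) : ℝ) * S) + S := by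
              apply add_le_add
              · rw [norm_mul]
                exact mul_le_mul hcle hineq (norm_nonneg _) zero_le_one
              · exact le_trans herr (hterm ⟨k, hkn⟩)
          _ ≤ ((N ^ 2 - 1 - k : ℕ) : ℝ) * S := by
              rw [one_mul]
              have h1 : (N ^ 2 - 1 - (k + 1)) + 1 = N ^ 2 - 1 - k := by omega
              rw [← h1]
              push_cast
              linarith
  have hfinal := key (N ^ 2) 0 (by omega)
  have hG0 : G 0 = ⟪Ψ₀, ((List.ofFn U).reverse.prod) Ψ₀⟫_ℂ := by rw [hGdef]; simp
  have hP0 : (∏ i ∈ Finset.Ico 0 (N ^ 2), p' i) = ∏ i, p i := by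
    rw [← Finset.range_eq_Ico, ← Fin.prod_univ_eq_prod_range]
    apply Finset.prod_congr rfl
    intro i _
    simp [hp', i.isLt]
  rw [hG0, hP0] at hfinal
  have hcast : ((N ^ 2 - 1 - 0 : ℕ) : ℝ) = (N : ℝ) ^ 2 - 1 := by
    rw [Nat.sub_zero, Nat.cast_sub hn1]
    push_cast
    ring
  rw [hcast] at hfinal
  exact hfinal
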